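/- arXiv:2406.02747 — 2 statements merged into one kernel-verified Lean document; each statement's English description precedes it below -/
import Mathlib

section
/- Let ξ₀(s) = ∫₀¹ ((1−x)/(1+x))·s·x^{s−1} dx for s > 0. Then s·ξ₀′(s) + ξ₀(s) > 0 for every s > 0; equivalently, (log(s·ξ₀(s)))′ > 0. -/
open MeasureTheory Real Set

noncomputable def ξ₀ (s : ℝ) : ℝ :=
  ∫ x in (0:ℝ)..1, ((1 - x) / (1 + x)) * (s * x ^ (s - 1))

noncomputable def ξ₀' (s : ℝ) : ℝ :=
  ∫ x in (0:ℝ)..1, 2 * x ^ s * Real.log x / (1 + x) ^ 2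

/-- `log y ≤ y^c/c` trick: `-log t ≤ c⁻¹ * t ^ (-c)` for `t > 0`. -/
lemma neg_log_le_aux {c t : ℝ} (hc : 0 < c) (ht : 0 < t) :
    -Real.log t ≤ c⁻¹ * t ^ (-c) := by
  have h1 : Real.log (t ^ (-c)) ≤ t ^ (-c) - 1 :=
    Real.log_le_sub_one_of_pos (Real.rpow_pos_of_pos ht _)
  rw [Real.log_rpow ht] at h1
  have h2 : 0 < t ^ (-c) := Real.rpow_pos_of_pos ht _
  have h3 : -Real.log t ≤ t ^ (-c) / c := by
    rw [le_div_iff₀ hc]; nlinarith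
  simpa [div_eq_inv_mul] using h3

/-- Domination criterion for interval integrability on `[0,1]`. -/
lemma II_of_bound {f g : ℝ → ℝ}
    (hm : AEStronglyMeasurable f (volume.restrict (Ioc (0:ℝ) 1)))
    (hg : IntervalIntegrable g volume 0 1)
    (hb : ∀ t ∈ Ioc (0:ℝ) 1, ‖f t‖ ≤ g t) :
    IntervalIntegrable f volume 0 1 := by
  rw [intervalIntegrable_iff, uIoc_of_le (zero_le_one (α := ℝ))] at hg ⊢
  refine MeasureTheory.Integrable.mono hg hm ?_
  rw [ae_restrict_iff' measurableSet_Ioc]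
  refine ae_of_all _ fun t ht => (hb t ht).trans ?_
  simpa [Real.norm_eq_abs] using le_abs_self (g t)

lemma contOn_f2 {u : ℝ} (hu : 0 < u) :
    ContinuousOn (fun t : ℝ => 2 * t ^ u / (1 + t) ^ 2) (Icc 0 1) := by
  intro t ht
  have hne : ((1:ℝ) + t) ^ 2 ≠ 0 := by nlinarith [ht.1]
  exact ((continuousAt_const.mul
      (Real.continuousAt_rpow_const t u (Or.inr hu.le))).div (by fun_prop) hne).continuousWithinAt

lemma II_f2 {u : ℝ} (hu : 0 < u) :
    IntervalIntegrable (fun t : ℝ => 2 * t ^ u / (1 + t) ^ 2) volume 0 1 := by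
  apply ContinuousOn.intervalIntegrable
  rw [uIcc_of_le (zero_le_one (α := ℝ))]
  exact contOn_f2 hu

/-- Integration by parts: `ξ₀ s = ∫ 2 x^s/(1+x)²`. -/
lemma xi0_eq {s : ℝ} (hs : 0 < s) :
    ξ₀ s = ∫ x in (0:ℝ)..1, 2 * x ^ s / (1 + x) ^ 2 := by
  set f : ℝ → ℝ := fun t => (1 - t) / (1 + t) * t ^ s with hf
  have hcont : ContinuousOn f (Icc 0 1) := by
    intro t ht
    have hne : (1:ℝ) + t ≠ 0 := by nlinarith [ht.1]
    exact (((continuousAt_const.sub continuousAt_id).div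
      (continuousAt_const.add continuousAt_id) hne).mul
      (Real.continuousAt_rpow_const t s (Or.inr hs.le))).continuousWithinAt
  have hint1 : IntervalIntegrable (fun t : ℝ => (1 - t) / (1 + t) * (s * t ^ (s - 1)))
      volume 0 1 := by
    refine II_of_bound ?_ ((intervalIntegral.intervalIntegrable_rpow'
        (by linarith : (-1:ℝ) < s - 1)).const_mul s) ?_
    · apply ContinuousOn.aestronglyMeasurable _ measurableSet_Ioc
      intro t ht
      have hne : (1:ℝ) + t ≠ 0 := by nlinarith [ht.1]
      exact (((continuousAt_const.sub continuousAt_id).div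
        (continuousAt_const.add continuousAt_id) hne).mul
        (continuousAt_const.mul
          (Real.continuousAt_rpow_const t (s-1) (Or.inl ht.1.ne')))).continuousWithinAt
    · intro t ht
      have h0 : (0:ℝ) ≤ s * t ^ (s - 1) :=
        mul_nonneg hs.le (Real.rpow_nonneg ht.1.le _)
      have h1 : |(1 - t) / (1 + t)| ≤ 1 := by
        rw [abs_div, abs_of_nonneg (by nlinarith [ht.2] : (0:ℝ) ≤ 1 - t),
          abs_of_nonneg (by nlinarith [ht.1] : (0:ℝ) ≤ 1 + t),
          div_le_one (by nlinarith [ht.1])]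
        nlinarith [ht.1]
      calc ‖(1 - t) / (1 + t) * (s * t ^ (s - 1))‖
          = |(1 - t) / (1 + t)| * |s * t ^ (s - 1)| := by rw [Real.norm_eq_abs, abs_mul]
        _ ≤ 1 * (s * t ^ (s - 1)) := by
            rw [abs_of_nonneg h0]; exact mul_le_mul_of_nonneg_right h1 h0
        _ = s * t ^ (s - 1) := one_mul _
  have hint2 := II_f2 hs
  have hderiv : ∀ t ∈ Ioo (0:ℝ) 1, HasDerivWithinAt f
      ((1 - t) / (1 + t) * (s * t ^ (s - 1)) - 2 * t ^ s / (1 + t) ^ 2) (Ioi t) t := by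
    intro t ht
    have hne : (1:ℝ) + t ≠ 0 := by nlinarith [ht.1]
    have h1 : HasDerivAt (fun y : ℝ => (1 - y) / (1 + y))
        (((-1) * (1 + t) - (1 - t) * 1) / (1 + t) ^ 2) t := by
      have ha : HasDerivAt (fun y : ℝ => 1 - y) (-1) t := by
        simpa using ((hasDerivAt_id t).const_sub 1)
      have hb : HasDerivAt (fun y : ℝ => 1 + y) 1 t := by
        simpa using ((hasDerivAt_id t).const_add 1)
      simpa using ha.fun_div hb hne
    have h2 : HasDerivAt (fun y : ℝ => y ^ s) (s * t ^ (s - 1)) t :=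
      Real.hasDerivAt_rpow_const (Or.inl ht.1.ne')
    have h3 := h1.mul h2
    have heq : ((-1) * (1 + t) - (1 - t) * 1) / (1 + t) ^ 2 * t ^ s
        + (1 - t) / (1 + t) * (s * t ^ (s - 1))
        = (1 - t) / (1 + t) * (s * t ^ (s - 1)) - 2 * t ^ s / (1 + t) ^ 2 := by
      field_simp
      ring
    rw [heq] at h3
    exact h3.hasDerivWithinAt
  have h0 : (∫ t in (0:ℝ)..1,
      ((1 - t) / (1 + t) * (s * t ^ (s - 1)) - 2 * t ^ s / (1 + t) ^ 2)) = f 1 - f 0 :=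
    intervalIntegral.integral_eq_sub_of_hasDeriv_right_of_le zero_le_one hcont hderiv
      (hint1.sub hint2)
  have hf1 : f 1 = 0 := by simp [hf]
  have hf0 : f 0 = 0 := by simp [hf, Real.zero_rpow hs.ne']
  rw [intervalIntegral.integral_sub hint1 hint2, hf1, hf0] at h0
  unfold ξ₀
  linarith

lemma xi0_pos {s : ℝ} (hs : 0 < s) : 0 < ξ₀ s := by
  rw [xi0_eq hs]
  refine intervalIntegral.intervalIntegral_pos_of_pos_on (II_f2 hs) ?_ zero_lt_one
  intro t ht
  have h1 : 0 < t ^ s := Real.rpow_pos_of_pos ht.1 s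
  have h2 : (0:ℝ) < (1 + t) ^ 2 := pow_pos (by linarith [ht.1]) 2
  exact div_pos (by linarith) h2

/-- Differentiation under the integral sign: `ξ₀` has derivative `ξ₀'`. -/
lemma xi0_hasDeriv {s : ℝ} (hs : 0 < s) :
    IntervalIntegrable (fun t : ℝ => 2 * t ^ s * Real.log t / (1 + t) ^ 2) volume 0 1 ∧
    HasDerivAt ξ₀ (ξ₀' s) s := by
  have hIoc : Set.uIoc (0:ℝ) 1 = Set.Ioc 0 1 := uIoc_of_le zero_le_one
  have key := intervalIntegral.hasDerivAt_integral_of_dominated_loc_of_deriv_le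
    (F := fun u (t : ℝ) => 2 * t ^ u / (1 + t) ^ 2)
    (F' := fun u (t : ℝ) => 2 * t ^ u * Real.log t / (1 + t) ^ 2)
    (x₀ := s) (a := 0) (b := 1) (μ := volume)
    (bound := fun t => 8 / s * t ^ (s / 4))
    (Metric.ball_mem_nhds s (half_pos hs))
    (Filter.Eventually.of_forall fun u => by
      rw [hIoc]
      apply ContinuousOn.aestronglyMeasurable _ measurableSet_Ioc
      intro t ht
      have hne : ((1:ℝ) + t) ^ 2 ≠ 0 := by nlinarith [ht.1]
      exact ((continuousAt_const.mul
        (Real.continuousAt_rpow_const t u (Or.inl ht.1.ne'))).div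
        (by fun_prop) hne).continuousWithinAt)
    (II_f2 hs)
    (by
      rw [hIoc]
      apply ContinuousOn.aestronglyMeasurable _ measurableSet_Ioc
      intro t ht
      have hne : ((1:ℝ) + t) ^ 2 ≠ 0 := by nlinarith [ht.1]
      exact (((continuousAt_const.mul
        (Real.continuousAt_rpow_const t s (Or.inl ht.1.ne'))).mul
        (Real.continuousAt_log ht.1.ne')).div (by fun_prop) hne).continuousWithinAt)
    (by
      refine ae_of_all _ fun t ht u hu => ?_
      rw [hIoc] at ht
      have ht0 := ht.1
      have hlog : 0 ≤ -Real.log t := by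
        simpa using Real.log_nonpos ht.1.le ht.2
      have hu2 : s / 2 ≤ u := by
        rw [Metric.mem_ball, Real.dist_eq, abs_lt] at hu
        linarith [hu.1]
      have htu : t ^ u ≤ t ^ (s / 2) :=
        Real.rpow_le_rpow_of_exponent_ge ht.1 ht.2 hu2
      have hb1 : ‖2 * t ^ u * Real.log t / (1 + t) ^ 2‖ ≤ 2 * t ^ u * (-Real.log t) := by
        rw [Real.norm_eq_abs, abs_div, abs_of_nonneg (by nlinarith : (0:ℝ) ≤ (1 + t) ^ 2)]
        refine (div_le_self (abs_nonneg _) (by nlinarith)).trans_eq ?_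
        rw [abs_mul, abs_mul, abs_of_nonneg (by norm_num : (0:ℝ) ≤ 2),
          abs_of_nonneg (Real.rpow_nonneg ht0.le u),
          abs_of_nonpos (Real.log_nonpos ht.1.le ht.2)]
      refine hb1.trans ?_
      have hb2 : 2 * t ^ u * (-Real.log t) ≤ 2 * t ^ (s / 2) * (-Real.log t) := by
        apply mul_le_mul_of_nonneg_right _ hlog
        linarith
      refine hb2.trans ?_
      have hb3 : -Real.log t ≤ (s / 4)⁻¹ * t ^ (-(s / 4)) :=
        neg_log_le_aux (by linarith) ht.1
      have hb4 : 2 * t ^ (s / 2) * (-Real.log t)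
          ≤ 2 * t ^ (s / 2) * ((s / 4)⁻¹ * t ^ (-(s / 4))) :=
        mul_le_mul_of_nonneg_left hb3 (by positivity)
      refine hb4.trans_eq ?_
      have hre : t ^ (s / 2) * t ^ (-(s / 4)) = t ^ (s / 4) := by
        rw [← Real.rpow_add ht.1]; congr 1; ring
      rw [show 2 * t ^ (s / 2) * ((s / 4)⁻¹ * t ^ (-(s / 4)))
          = 2 * (s / 4)⁻¹ * (t ^ (s / 2) * t ^ (-(s / 4))) from by ring, hre, inv_div]
      ring)
    ((intervalIntegral.intervalIntegrable_rpow'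
      (by linarith : (-1:ℝ) < s / 4)).const_mul (8 / s))
    (by
      refine ae_of_all _ fun t ht u hu => ?_
      rw [hIoc] at ht
      have h1 : HasDerivAt (fun x : ℝ => t ^ x) (t ^ u * Real.log t) u :=
        (Real.hasStrictDerivAt_const_rpow ht.1 u).hasDerivAt
      have h2 := (h1.const_mul 2).div_const ((1 + t) ^ 2)
      refine h2.congr_deriv ?_
      ring)
  refine ⟨key.1, ?_⟩
  have heq : ξ₀ =ᶠ[nhds s] fun u => ∫ t in (0:ℝ)..1, 2 * t ^ u / (1 + t) ^ 2 := by
    filter_upwards [Ioi_mem_nhds hs] with u hu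
    exact xi0_eq hu
  exact HasDerivAt.congr_of_eventuallyEq key.2 heq

lemma II_B {s : ℝ} (hs : 0 < s) :
    IntervalIntegrable
      (fun t : ℝ => 2 * (1 - t) * t ^ s * (-Real.log t) / (1 + t) ^ 3) volume 0 1 := by
  refine II_of_bound ?_ ((intervalIntegral.intervalIntegrable_rpow'
      (by linarith : (-1:ℝ) < s / 2)).const_mul (4 / s)) ?_
  · apply ContinuousOn.aestronglyMeasurable _ measurableSet_Ioc
    intro t ht
    have hne : ((1:ℝ) + t) ^ 3 ≠ 0 := (pow_pos (by linarith [ht.1] : (0:ℝ) < 1 + t) 3).ne'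
    exact ((((continuousAt_const.mul (continuousAt_const.sub continuousAt_id)).mul
      (Real.continuousAt_rpow_const t s (Or.inl ht.1.ne'))).mul
      (Real.continuousAt_log ht.1.ne').neg).div
      ((continuousAt_const.add continuousAt_id).pow 3) hne).continuousWithinAt
  · intro t ht
    have hlog : 0 ≤ -Real.log t := by simpa using Real.log_nonpos ht.1.le ht.2
    have hts : 0 ≤ t ^ s := Real.rpow_nonneg ht.1.le s
    have hb1 : ‖2 * (1 - t) * t ^ s * (-Real.log t) / (1 + t) ^ 3‖
        ≤ 2 * t ^ s * (-Real.log t) := by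
      have h1t : (0:ℝ) < 1 + t := by linarith [ht.1]
      rw [Real.norm_eq_abs, abs_div, abs_of_nonneg (pow_pos h1t 3).le]
      have hcube : (1:ℝ) ≤ (1 + t) ^ 3 := by
        nlinarith [ht.1, mul_pos ht.1 ht.1, mul_pos (mul_pos ht.1 ht.1) ht.1]
      refine (div_le_self (abs_nonneg _) hcube).trans ?_
      rw [abs_of_nonneg (mul_nonneg (mul_nonneg
        (by nlinarith [ht.2] : (0:ℝ) ≤ 2 * (1 - t)) hts) hlog)]
      nlinarith [mul_nonneg hts hlog, ht.1, mul_nonneg (mul_nonneg ht.1.le hts) hlog]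
    refine hb1.trans ?_
    have hb3 : -Real.log t ≤ (s / 2)⁻¹ * t ^ (-(s / 2)) :=
      neg_log_le_aux (by linarith) ht.1
    have hb4 : 2 * t ^ s * (-Real.log t) ≤ 2 * t ^ s * ((s / 2)⁻¹ * t ^ (-(s / 2))) :=
      mul_le_mul_of_nonneg_left hb3 (by positivity)
    refine hb4.trans_eq ?_
    have hre : t ^ s * t ^ (-(s / 2)) = t ^ (s / 2) := by
      rw [← Real.rpow_add ht.1]; congr 1; ring
    rw [show 2 * t ^ s * ((s / 2)⁻¹ * t ^ (-(s / 2)))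
        = 2 * (s / 2)⁻¹ * (t ^ s * t ^ (-(s / 2))) from by ring, hre, inv_div]
    ring

/-- Key positivity: `s * ξ₀' s + ξ₀ s` equals a manifestly positive integral. -/
lemma key_pos {s : ℝ} (hs : 0 < s) : 0 < s * ξ₀' s + ξ₀ s := by
  have hint3 := (xi0_hasDeriv hs).1
  have hint2 := II_f2 hs
  have hintB := II_B hs
  set P : ℝ → ℝ := fun t => 2 * t ^ (s + 1) * Real.log t / (1 + t) ^ 2 with hP
  set A : ℝ → ℝ := fun t =>
    s * (2 * t ^ s * Real.log t / (1 + t) ^ 2) + 2 * t ^ s / (1 + t) ^ 2 with hA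
  set B : ℝ → ℝ := fun t => 2 * (1 - t) * t ^ s * (-Real.log t) / (1 + t) ^ 3 with hB
  have hintA : IntervalIntegrable A volume 0 1 := (hint3.const_mul s).add hint2
  have hP0 : P 0 = 0 := by
    simp [hP, Real.zero_rpow (by linarith : s + 1 ≠ 0)]
  have hcontP : ContinuousOn P (Icc 0 1) := by
    intro t ht
    rcases eq_or_lt_of_le ht.1 with h | h
    · subst h
      have h2 := tendsto_log_mul_rpow_nhdsGT_zero (by linarith : (0:ℝ) < s + 1)
      have h3 : Filter.Tendsto (fun t : ℝ => 2 / (1 + t) ^ 2)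
          (nhdsWithin 0 (Ioi 0)) (nhds 2) := by
        have hc : ContinuousAt (fun t : ℝ => 2 / (1 + t) ^ 2) 0 :=
          continuousAt_const.div (by fun_prop) (by norm_num)
        have := hc.tendsto
        norm_num at this
        exact this.mono_left nhdsWithin_le_nhds
      have h4 := h2.mul h3
      rw [zero_mul] at h4
      have h1 : Filter.Tendsto P (nhdsWithin 0 (Ioi 0)) (nhds 0) := by
        refine h4.congr' ?_
        filter_upwards [self_mem_nhdsWithin] with t _
        simp only [hP]
        ring
      refine ContinuousWithinAt.mono ?_ Icc_subset_Ici_self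
      rw [← continuousWithinAt_Ioi_iff_Ici]
      show Filter.Tendsto P (nhdsWithin 0 (Ioi 0)) (nhds (P 0))
      rw [hP0]
      exact h1
    · have hne : ((1:ℝ) + t) ^ 2 ≠ 0 := by nlinarith
      exact (((continuousAt_const.mul
        (Real.continuousAt_rpow_const t (s+1) (Or.inl h.ne'))).mul
        (Real.continuousAt_log h.ne')).div (by fun_prop) hne).continuousWithinAt
  have hderivP : ∀ t ∈ Ioo (0:ℝ) 1, HasDerivWithinAt P (A t - B t) (Ioi t) t := by
    intro t ht
    have ht0 : (0:ℝ) < t := ht.1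
    have hne : (1:ℝ) + t ≠ 0 := by nlinarith
    have h1 : HasDerivAt (fun y : ℝ => y ^ (s + 1)) ((s + 1) * t ^ s) t := by
      have := Real.hasDerivAt_rpow_const (x := t) (p := s + 1) (Or.inl ht0.ne')
      simpa using this
    have h2 : HasDerivAt Real.log t⁻¹ t := Real.hasDerivAt_log ht0.ne'
    have h3 := (h1.const_mul 2).fun_mul h2
    have h4 : HasDerivAt (fun y : ℝ => (1 + y) ^ 2) (2 * (1 + t)) t := by
      have hb : HasDerivAt (fun y : ℝ => 1 + y) 1 t := by
        simpa using ((hasDerivAt_id t).const_add 1)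
      simpa using hb.fun_pow 2
    have h5 := h3.fun_div h4 (by nlinarith)
    refine HasDerivAt.hasDerivWithinAt ?_
    refine h5.congr_deriv ?_
    simp only [hA, hB]
    rw [Real.rpow_add_one ht0.ne' s]
    field_simp
    ring
  have hFTC := intervalIntegral.integral_eq_sub_of_hasDeriv_right_of_le zero_le_one hcontP
    hderivP (hintA.sub hintB)
  have hP1 : P 1 = 0 := by simp [hP]
  rw [intervalIntegral.integral_sub hintA hintB, hP1, hP0, sub_zero] at hFTC
  have hAval : (∫ t in (0:ℝ)..1, A t) = s * ξ₀' s + ξ₀ s := by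
    simp only [hA]
    rw [intervalIntegral.integral_add (hint3.const_mul s) hint2,
      intervalIntegral.integral_const_mul, xi0_eq hs]
    rfl
  have hBpos : 0 < ∫ t in (0:ℝ)..1, B t := by
    refine intervalIntegral.intervalIntegral_pos_of_pos_on hintB ?_ zero_lt_one
    intro t ht
    have h1 : 0 < -Real.log t := by
      simpa using Real.log_neg ht.1 ht.2
    have h2 : 0 < t ^ s := Real.rpow_pos_of_pos ht.1 s
    simp only [hB]
    have h3 : (0:ℝ) < 1 - t := by linarith [ht.2]
    exact div_pos (mul_pos (mul_pos (by linarith : (0:ℝ) < 2 * (1 - t)) h2) h1)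
      (pow_pos (by linarith [ht.1]) 3)
  rw [hAval] at hFTC
  linarith

theorem s_xi0'_add_xi0_pos (s : ℝ) (hs : 0 < s) :
    s * ξ₀' s + ξ₀ s > 0 ∧
    HasDerivAt (fun u => Real.log (u * ξ₀ u)) ((s * ξ₀' s + ξ₀ s) / (s * ξ₀ s)) s ∧
    (s * ξ₀' s + ξ₀ s) / (s * ξ₀ s) > 0 := by
  have hpos := key_pos hs
  have hξ := xi0_pos hs
  have hD := (xi0_hasDeriv hs).2
  have hprod : HasDerivAt (fun u : ℝ => u * ξ₀ u) (1 * ξ₀ s + s * ξ₀' s) s :=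
    (hasDerivAt_id s).mul hD
  have hne : s * ξ₀ s ≠ 0 := (mul_pos hs hξ).ne'
  have hlog := hprod.log hne
  refine ⟨hpos, ?_, div_pos hpos (mul_pos hs hξ)⟩
  convert hlog using 2
  ring
end

section
/- Let q : 𝔻 → ℂ be holomorphic with q(0) = 1 and Re q(z) ≥ 0 on 𝔻, let s₁ > 0, t₁ ∈ [0,1), and define p(z) = t₁ + (1−t₁)·∫₀¹ q(xz)·s₁ x^{s₁−1} dx. Then for all z ∈ 𝔻, Re p(z) ≥ t₁ + (1−t₁)·∫₀¹ ((1−x|z|)/(1+x|z|))·s₁ x^{s₁−1} dx ≥ t₁ + (1−t₁)·ξ₀(s₁), where ξ₀(s₁) = ∫₀¹ ((1−x)/(1+x))·s₁ x^{s₁−1} dx. -/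
open Complex Set Metric MeasureTheory

lemma mono_frac {a b : ℝ} (ha : 0 ≤ a) (hab : a ≤ b) :
    (1 - b) / (1 + b) ≤ (1 - a) / (1 + a) := by
  rw [div_le_div_iff₀ (by linarith) (by linarith)]
  nlinarith

lemma harnack_strict (q : ℂ → ℂ)
    (hq : DifferentiableOn ℂ q (ball (0 : ℂ) 1))
    (hq0 : q 0 = 1) (hqre : ∀ z ∈ ball (0 : ℂ) 1, 0 < (q z).re) :
    ∀ w ∈ ball (0 : ℂ) 1, (1 - ‖w‖) / (1 + ‖w‖) ≤ (q w).re := by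
  intro w hw
  have hw1 : ‖w‖ < 1 := by simpa [mem_ball, dist_zero_right] using hw
  set f : ℂ → ℂ := fun z => (q z - 1) / (q z + 1) with hf
  have hne : ∀ z ∈ ball (0 : ℂ) 1, q z + 1 ≠ 0 := by
    intro z hz h
    have := hqre z hz
    have : (q z + 1).re = (q z).re + 1 := by simp
    simp [h] at this; linarith [hqre z hz]
  have hdf : DifferentiableOn ℂ f (ball (0 : ℂ) 1) :=
    ((hq.sub (differentiableOn_const 1)).div (hq.add (differentiableOn_const 1)) hne)
  have hmaps : MapsTo f (ball (0 : ℂ) 1) (ball (0 : ℂ) 1) := by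
    intro z hz
    rw [mem_ball, dist_zero_right]
    have h1 : ‖q z - 1‖ < ‖q z + 1‖ := by
      have h2 : ‖q z - 1‖ ^ 2 < ‖q z + 1‖ ^ 2 := by
        simp only [Complex.sq_norm, Complex.normSq_apply, Complex.sub_re,
          Complex.sub_im, Complex.add_re, Complex.add_im, Complex.one_re, Complex.one_im]
        nlinarith [hqre z hz]
      have := lt_of_pow_lt_pow_left₀ 2 (norm_nonneg _) h2
      simpa using this
    rw [hf]
    simp only
    rw [norm_div]
    rw [div_lt_one (lt_of_le_of_lt (norm_nonneg _) h1)]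
    exact h1
  have hf0 : f 0 = 0 := by simp [hf, hq0]
  have hfw : ‖f w‖ ≤ ‖w‖ := by
    have := Complex.norm_le_norm_of_mapsTo_ball_self hdf (hmaps.mono_right ball_subset_closedBall) hf0
      (by simpa using hw1)
    simpa using this
  set u := f w with hu
  have hu1 : ‖u‖ < 1 := lt_of_le_of_lt hfw hw1
  have hune : (1 : ℂ) - u ≠ 0 := by
    intro h
    have : (1 : ℂ) = u := by linear_combination h
    rw [← this] at hu1; simp at hu1
  have hqw : q w = (1 + u) / (1 - u) := by
    have hne' : q w + 1 ≠ 0 := hne w hw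
    have h1 : u * (q w + 1) = q w - 1 := by
      rw [hu, hf]; field_simp
    field_simp
    linear_combination -h1
  have hre : (q w).re = (1 - (u.re ^ 2 + u.im ^ 2)) / ((1 - u.re) ^ 2 + u.im ^ 2) := by
    rw [hqw, Complex.div_re, Complex.normSq_apply]
    simp only [Complex.add_re, Complex.add_im, Complex.sub_re, Complex.sub_im, Complex.one_re,
      Complex.one_im]
    ring
  set r := ‖u‖ with hr
  have hr2 : u.re ^ 2 + u.im ^ 2 = r ^ 2 := by
    rw [hr, Complex.sq_norm, Complex.normSq_apply]; ring
  have hxr : |u.re| ≤ r := by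
    rw [hr]; exact Complex.abs_re_le_norm u
  obtain ⟨hxr1, hxr2⟩ := abs_le.mp hxr
  have hr0 : 0 ≤ r := norm_nonneg _
  have hx1 : u.re < 1 := lt_of_le_of_lt hxr2 hu1
  have hden : 0 < (1 - u.re) ^ 2 + u.im ^ 2 := by nlinarith
  have step1 : (1 - r) / (1 + r) ≤ (q w).re := by
    rw [hre, div_le_div_iff₀ (by linarith) hden]
    nlinarith [mul_nonneg (by linarith : (0:ℝ) ≤ 1 - r) (by linarith : (0:ℝ) ≤ r + u.re)]
  exact le_trans (mono_frac hr0 hfw) step1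

lemma harnack (q : ℂ → ℂ)
    (hq : DifferentiableOn ℂ q (ball (0 : ℂ) 1))
    (hq0 : q 0 = 1) (hqre : ∀ z ∈ ball (0 : ℂ) 1, 0 ≤ (q z).re) :
    ∀ w ∈ ball (0 : ℂ) 1, (1 - ‖w‖) / (1 + ‖w‖) ≤ (q w).re := by
  intro w hw
  have hw1 : ‖w‖ < 1 := by simpa [mem_ball, dist_zero_right] using hw
  set B := (1 - ‖w‖) / (1 + ‖w‖) with hB
  have hB0 : 0 ≤ B := div_nonneg (by linarith) (by positivity)
  have hB1 : B ≤ 1 := by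
    rw [hB, div_le_one (by positivity)]; linarith [norm_nonneg w]
  refine le_of_forall_pos_le_add ?_
  intro ε hε
  set Q : ℂ → ℂ := fun z => ((1 + ε : ℝ)⁻¹ : ℂ) * (q z + (ε : ℝ)) with hQ
  have hQd : DifferentiableOn ℂ Q (ball (0 : ℂ) 1) :=
    ((hq.add (differentiableOn_const _)).const_mul _)
  have h1e : (0:ℝ) < 1 + ε := by linarith
  have hcne : ((1 + ε : ℝ) : ℂ) ≠ 0 := by exact_mod_cast ne_of_gt h1e
  have hQz : ∀ z : ℂ, (Q z).re = (1 + ε)⁻¹ * ((q z).re + ε) := by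
    intro z
    rw [hQ]
    simp only [← Complex.ofReal_inv]
    rw [Complex.re_ofReal_mul]
    simp [Complex.add_re, Complex.ofReal_re]
  have hQ0 : Q 0 = 1 := by
    rw [hQ]
    simp only [hq0]
    rw [show (1:ℂ) + (ε:ℂ) = ((1 + ε : ℝ) : ℂ) by push_cast; ring, inv_mul_cancel₀ hcne]
  have hQre : ∀ z ∈ ball (0 : ℂ) 1, 0 < (Q z).re := by
    intro z hz
    rw [hQz z]
    have := hqre z hz
    have h1 : (0:ℝ) < (1+ε)⁻¹ := by positivity
    positivity
  have key := harnack_strict Q hQd hQ0 hQre w hw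
  rw [hQz w] at key
  have hX : (0:ℝ) ≤ (q w).re + ε := by linarith [hqre w hw]
  have hmul : (1 + ε)⁻¹ * (1 + ε) = 1 := inv_mul_cancel₀ (ne_of_gt h1e)
  nlinarith [key, hX, hmul, inv_nonneg.mpr h1e.le,
    mul_nonneg (inv_nonneg.mpr h1e.le) hX, hε]

theorem harnack_lower_bound (q : ℂ → ℂ)
    (hq : DifferentiableOn ℂ q (Metric.ball (0 : ℂ) 1))
    (hq0 : q 0 = 1) (hqre : ∀ z ∈ Metric.ball (0 : ℂ) 1, 0 ≤ (q z).re)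
    (s₁ t₁ : ℝ) (hs₁ : 0 < s₁) (ht₁ : t₁ ∈ Set.Ico (0:ℝ) 1)
    (p : ℂ → ℂ)
    (hp : ∀ z : ℂ, p z = (t₁ : ℂ) + (1 - (t₁ : ℂ)) *
        ∫ x in (0:ℝ)..1, q ((x : ℂ) * z) * ((s₁ * x ^ (s₁ - 1) : ℝ) : ℂ)) :
    ∀ z ∈ Metric.ball (0 : ℂ) 1,
      (p z).re ≥ t₁ + (1 - t₁) *
          ∫ x in (0:ℝ)..1, ((1 - x * ‖z‖) / (1 + x * ‖z‖)) * (s₁ * x ^ (s₁ - 1)) ∧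
      t₁ + (1 - t₁) *
          (∫ x in (0:ℝ)..1, ((1 - x * ‖z‖) / (1 + x * ‖z‖)) * (s₁ * x ^ (s₁ - 1)))
        ≥ t₁ + (1 - t₁) * ξ₀ s₁ := by
  intro z hz
  have hz1 : ‖z‖ < 1 := by simpa [mem_ball, dist_zero_right] using hz
  have hz0 : (0:ℝ) ≤ ‖z‖ := norm_nonneg z
  set r := ‖z‖ with hr
  set g : ℝ → ℝ := fun x => s₁ * x ^ (s₁ - 1) with hgdef
  have hg : IntervalIntegrable g volume 0 1 :=
    (intervalIntegral.intervalIntegrable_rpow' (by linarith)).const_mul s₁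
  have hgc : IntervalIntegrable (fun x => ((g x : ℝ) : ℂ)) volume 0 1 :=
    ⟨hg.1.ofReal, hg.2.ofReal⟩
  have hgnn : ∀ x ∈ Icc (0:ℝ) 1, 0 ≤ g x := fun x hx =>
    mul_nonneg hs₁.le (Real.rpow_nonneg hx.1 _)
  -- continuity of x ↦ q (x z) on [0,1]
  have hmem : ∀ x ∈ uIcc (0:ℝ) 1, ((x:ℂ) * z) ∈ ball (0:ℂ) 1 := by
    intro x hx
    rw [uIcc_of_le (by norm_num : (0:ℝ) ≤ 1)] at hx
    rw [mem_ball, dist_zero_right, norm_mul, Complex.norm_real, Real.norm_eq_abs,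
      _root_.abs_of_nonneg hx.1]
    calc x * ‖z‖ ≤ 1 * ‖z‖ := mul_le_mul_of_nonneg_right hx.2 hz0
    _ < 1 := by simpa using hz1
  have hmem' : ∀ x ∈ Icc (0:ℝ) 1, ((x:ℂ) * z) ∈ ball (0:ℂ) 1 := by
    intro x hx
    exact hmem x (by rwa [uIcc_of_le (by norm_num : (0:ℝ) ≤ 1)])
  have hqc : ContinuousOn (fun x : ℝ => q ((x:ℂ) * z)) (uIcc (0:ℝ) 1) := by
    apply hq.continuousOn.comp
    · exact (Complex.continuous_ofReal.mul continuous_const).continuousOn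
    · exact hmem
  -- integrability of complex integrand
  have hint : IntervalIntegrable (fun x : ℝ => q ((x:ℂ) * z) * ((g x : ℝ) : ℂ))
      volume 0 1 := hgc.continuousOn_mul hqc
  -- real part of p z
  have hre : (p z).re = t₁ + (1 - t₁) * ∫ x in (0:ℝ)..1, (q ((x:ℂ) * z)).re * g x := by
    rw [hp z]
    have hcomm := Complex.reCLM.intervalIntegral_comp_comm hint
    simp only [Complex.reCLM_apply] at hcomm
    have h2 : (∫ x in (0:ℝ)..1, q ((x:ℂ) * z) * ((g x : ℝ) : ℂ)).re
        = ∫ x in (0:ℝ)..1, (q ((x:ℂ) * z)).re * g x := by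
      rw [← hcomm]
      apply intervalIntegral.integral_congr
      intro x _
      simp [Complex.mul_re]
    simp only [Complex.add_re, Complex.mul_re, Complex.sub_re, Complex.sub_im,
      Complex.one_re, Complex.one_im, Complex.ofReal_re, Complex.ofReal_im]
    rw [h2]
    ring
  -- integrability of the middle integrand
  have hfrac : ContinuousOn (fun x : ℝ => (1 - x * r) / (1 + x * r)) (uIcc (0:ℝ) 1) := by
    apply ContinuousOn.div
    · fun_prop
    · fun_prop
    · intro x hx
      rw [uIcc_of_le (by norm_num : (0:ℝ) ≤ 1)] at hx
      have : 0 ≤ x * r := mul_nonneg hx.1 hz0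
      positivity
  have hmid : IntervalIntegrable (fun x : ℝ => (1 - x * r) / (1 + x * r) * g x)
      volume 0 1 := hg.continuousOn_mul hfrac
  have hlow : ContinuousOn (fun x : ℝ => (1 - x) / (1 + x)) (uIcc (0:ℝ) 1) := by
    apply ContinuousOn.div
    · fun_prop
    · fun_prop
    · intro x hx
      rw [uIcc_of_le (by norm_num : (0:ℝ) ≤ 1)] at hx
      intro h; linarith [hx.1]
  have hlowint : IntervalIntegrable (fun x : ℝ => (1 - x) / (1 + x) * g x)
      volume 0 1 := hg.continuousOn_mul hlow
  have hreint : IntervalIntegrable (fun x : ℝ => (q ((x:ℂ) * z)).re * g x)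
      volume 0 1 := hg.continuousOn_mul (Complex.continuous_re.comp_continuousOn hqc)
  have ht₁' : 0 ≤ 1 - t₁ := by linarith [ht₁.2]
  constructor
  · rw [hre]
    have key : (∫ x in (0:ℝ)..1, (1 - x * r) / (1 + x * r) * g x)
        ≤ ∫ x in (0:ℝ)..1, (q ((x:ℂ) * z)).re * g x := by
      apply intervalIntegral.integral_mono_on zero_le_one hmid hreint
      intro x hx
      apply mul_le_mul_of_nonneg_right _ (hgnn x hx)
      have hb := harnack q hq hq0 hqre ((x:ℂ) * z) (hmem' x hx)
      have hn : ‖(x:ℂ) * z‖ = x * r := by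
        rw [norm_mul, Complex.norm_real, Real.norm_eq_abs, _root_.abs_of_nonneg hx.1]
      rwa [hn] at hb
    have := mul_le_mul_of_nonneg_left key ht₁'
    simp only [ge_iff_le]
    linarith
  · rw [ξ₀]
    have key : (∫ x in (0:ℝ)..1, (1 - x) / (1 + x) * g x)
        ≤ ∫ x in (0:ℝ)..1, (1 - x * r) / (1 + x * r) * g x := by
      apply intervalIntegral.integral_mono_on zero_le_one hlowint hmid
      intro x hx
      apply mul_le_mul_of_nonneg_right _ (hgnn x hx)
      exact mono_frac (mul_nonneg hx.1 hz0) (by nlinarith [hx.1, hx.2])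
    have := mul_le_mul_of_nonneg_left key ht₁'
    simp only [ge_iff_le]
    linarith
end
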